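/- Fix an estimate (θ̂, x̂, p̂) ∈ ℝ × ℝ² × ℝ² and define the IEKF linearized error map ξ(θ, x, p) = (θ − θ̂, x − x̂ − (θ − θ̂) J x̂, p − p̂ − (θ − θ̂) J p̂) ∈ ℝ × ℝ² × ℝ². Then the map α ↦ ξ(θ̂ + α, R(α) x̂, R(α) p̂) is differentiable at α = 0 with derivative (1, 0, 0), and for any u ∈ ℝ², the map t ↦ ξ(θ̂, x̂ + t u, p̂ + t u) satisfies ξ(θ̂, x̂ + t u, p̂ + t u) = (0, t u, t u) exactly for all t. (The infinitesimal rotation and translation of the global frame are seen by the IEKF error as the constant directions (1,0,0) and (0,u,u).) -/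

import Mathlib

open Matrix Real

/-- The 2×2 rotation matrix of angle `θ`. -/
noncomputable def Rmat (θ : ℝ) : Matrix (Fin 2) (Fin 2) ℝ :=
  !![Real.cos θ, -Real.sin θ; Real.sin θ, Real.cos θ]

/-- The matrix `J = [[0,-1],[1,0]]`. -/
def Jmat : Matrix (Fin 2) (Fin 2) ℝ := !![0, -1; 1, 0]


/-- The IEKF linearized error variable associated with the estimate `(θ̂, x̂, p̂)`. -/
noncomputable def xiErr (θh : ℝ) (xh ph : Fin 2 → ℝ) (θ : ℝ) (x p : Fin 2 → ℝ) :
    ℝ × (Fin 2 → ℝ) × (Fin 2 → ℝ) :=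
  (θ - θh, x - xh - (θ - θh) • Jmat.mulVec xh, p - ph - (θ - θh) • Jmat.mulVec ph)


lemma rotErr_hasDerivAt (v : Fin 2 → ℝ) :
    HasDerivAt (fun α : ℝ => (Rmat α).mulVec v - v - α • Jmat.mulVec v) (0 : Fin 2 → ℝ) 0 := by
  rw [hasDerivAt_pi]
  intro i
  fin_cases i <;>
    simp [Rmat, Jmat, Matrix.mulVec, dotProduct, Fin.sum_univ_two, Matrix.vecHead,
      Matrix.vecTail]
  · have h := ((((Real.hasDerivAt_cos 0).mul_const (v 0)).add
        (((Real.hasDerivAt_sin 0).mul_const (v 1)).neg)).sub_const (v 0)).add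
        ((hasDerivAt_id 0).mul_const (v 1))
    convert h using 1
    · funext x
      simp
    · simp
  · have h := ((((Real.hasDerivAt_sin 0).mul_const (v 0)).add
        ((Real.hasDerivAt_cos 0).mul_const (v 1))).sub_const (v 1)).sub
        ((hasDerivAt_id 0).mul_const (v 0))
    convert h using 1
    · funext x
      simp
    · simp

/-- The IEKF error sees an infinitesimal rotation of the global frame as the
constant direction `(1,0,0)` (to first order at `α = 0`), and a translation by `t u` exactly as
`(0, t u, t u)`. -/
theorem statement4 (θh : ℝ) (xh ph : Fin 2 → ℝ) :
    HasDerivAt (fun α : ℝ =>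
        xiErr θh xh ph (θh + α) ((Rmat α).mulVec xh) ((Rmat α).mulVec ph))
      ((1 : ℝ), (0 : Fin 2 → ℝ), (0 : Fin 2 → ℝ)) 0 ∧
    ∀ (u : Fin 2 → ℝ) (t : ℝ),
      xiErr θh xh ph θh (xh + t • u) (ph + t • u) = ((0 : ℝ), t • u, t • u) := by
  constructor
  · simp only [xiErr, add_sub_cancel_left]
    exact (hasDerivAt_id (0 : ℝ)).prodMk ((rotErr_hasDerivAt xh).prodMk (rotErr_hasDerivAt ph))
  · intro u t
    simp [xiErr]
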